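/- Let (X,d) be a metric space and μ a Borel measure on X such that 0 < μ(B(x,ρ)) < ∞ for every x ∈ X, ρ > 0, and satisfying the strong homogeneity property: there are constants C ≥ 1 and n > 0 with μ(B(x,λρ)) ≤ C λ^n μ(B(x,ρ)) for all x ∈ X, ρ > 0, λ ≥ 1. Let 1 ≤ p₀ ≤ p < ∞, let y ∈ X and r > 0, and let f be a measurable function on X vanishing outside the ball B(y,r). Then ( ∫_X μ(B(z,r))^{(1/p − 1/p₀) p₀} |f(z)|^{p₀} dμ(z) )^{1/p₀} ≤ (C 2^n)^{1/p₀ − 1/p} ( ∫_X |f(z)|^p dμ(z) )^{1/p}. -/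

import Mathlib

open Metric MeasureTheory
open scoped ENNReal NNReal

/-- Multiplication by the weight `μ(B(·,r))^{1/p - 1/p₀}` maps `L^p` functions
supported in a ball of radius `r` boundedly into `L^{p₀}`. -/
theorem stmt_7 {X : Type*} [MetricSpace X] [MeasurableSpace X] [BorelSpace X]
    (μ : Measure X) (C n : ℝ) (hC : 1 ≤ C) (hn : 0 < n)
    (hpos : ∀ (x : X) (ρ : ℝ), 0 < ρ → 0 < μ (ball x ρ))
    (hfin : ∀ (x : X) (ρ : ℝ), 0 < ρ → μ (ball x ρ) < ⊤)
    (hH : ∀ (x : X) (ρ lam : ℝ), 0 < ρ → 1 ≤ lam →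
      μ (ball x (lam * ρ)) ≤ ENNReal.ofReal (C * lam ^ n) * μ (ball x ρ))
    (p₀ p : ℝ) (hp₀ : 1 ≤ p₀) (hp₀p : p₀ ≤ p)
    (y : X) (r : ℝ) (hr : 0 < r)
    (f : X → ℂ) (hf : Measurable f)
    (hsupp : ∀ z : X, z ∉ ball y r → f z = 0) :
    (∫⁻ z, μ (ball z r) ^ ((1 / p - 1 / p₀) * p₀) *
        ENNReal.ofReal (‖f z‖ ^ p₀) ∂μ) ^ (1 / p₀) ≤
      ENNReal.ofReal ((C * 2 ^ n) ^ (1 / p₀ - 1 / p)) *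
        (∫⁻ z, ENNReal.ofReal (‖f z‖ ^ p) ∂μ) ^ (1 / p) := by
  have hp₀0 : (0:ℝ) < p₀ := lt_of_lt_of_le one_pos hp₀
  have hp0 : (0:ℝ) < p := lt_of_lt_of_le hp₀0 hp₀p
  set K : ℝ≥0∞ := ENNReal.ofReal (C * 2 ^ n) with hK
  have hCpos : (0:ℝ) < C * 2 ^ n := by positivity
  have hK0 : K ≠ 0 := by
    simp [hK, ENNReal.ofReal_eq_zero, not_le, hCpos]
  have hKtop : K ≠ ⊤ := ENNReal.ofReal_ne_top
  set B : Set X := ball y r with hB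
  have hμB0 : μ B ≠ 0 := (hpos y r hr).ne'
  have hμBtop : μ B ≠ ⊤ := (hfin y r hr).ne
  set e : ℝ := (1 / p - 1 / p₀) * p₀ with he
  have he' : e = p₀ / p - 1 := by
    field_simp [he]
    rw [he]; field_simp
  -- lower bound for μ (ball z r) on B
  have hball : ∀ z ∈ B, μ B ≤ K * μ (ball z r) := by
    intro z hz
    have hsub : B ⊆ ball z (2 * r) := by
      intro w hw
      have h1 : dist w y < r := mem_ball.mp hw
      have h2 : dist y z < r := by
        have := mem_ball.mp hz
        rwa [dist_comm]
      have : dist w z < 2 * r := by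
        calc dist w z ≤ dist w y + dist y z := dist_triangle w y z
        _ < 2 * r := by linarith
      exact mem_ball.mpr this
    calc μ B ≤ μ (ball z (2 * r)) := measure_mono hsub
      _ ≤ K * μ (ball z r) := hH z r 2 hr one_le_two
  set g : X → ℝ≥0∞ := fun z => ENNReal.ofReal (‖f z‖ ^ p₀) with hg
  have hg0 : ∀ z ∉ B, g z = 0 := by
    intro z hz
    simp [hg, hsupp z hz, Real.zero_rpow hp₀0.ne']
  -- pointwise bound: weight ≤ K^(-e) * μ B ^ e on the support
  have hpoint : ∀ z, μ (ball z r) ^ e * g z ≤ K ^ (-e) * μ B ^ e * g z := by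
    intro z
    by_cases hz : z ∈ B
    · gcongr
      have hle : μ B / K ≤ μ (ball z r) := by
        rw [ENNReal.div_le_iff hK0 hKtop, mul_comm]
        exact hball z hz
      have hmee : (0:ℝ) ≤ -e := by
        have : e ≤ 0 := by
          rw [he']
          have : p₀ / p ≤ 1 := (div_le_one hp0).mpr hp₀p
          linarith
        linarith
      calc μ (ball z r) ^ e = (μ (ball z r) ^ (-e))⁻¹ := by
            rw [← ENNReal.rpow_neg]; norm_num
        _ ≤ ((μ B / K) ^ (-e))⁻¹ :=
            ENNReal.inv_le_inv.mpr (ENNReal.rpow_le_rpow hle hmee)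
        _ = (μ B / K) ^ e := by rw [← ENNReal.rpow_neg]; norm_num
        _ = K ^ (-e) * μ B ^ e := by
            rw [div_eq_mul_inv, ENNReal.mul_rpow_of_ne_top hμBtop
              (by simpa using hK0), ENNReal.inv_rpow, ← ENNReal.rpow_neg]
            ring
    · simp [hg0 z hz]
  have hgmeas : Measurable g := by
    apply Measurable.ennreal_ofReal
    exact (hf.norm).pow_const p₀
  have hint1 : (∫⁻ z, μ (ball z r) ^ e * g z ∂μ) ≤
      K ^ (-e) * μ B ^ e * ∫⁻ z, g z ∂μ := by
    rw [← lintegral_const_mul _ hgmeas]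
    exact lintegral_mono hpoint
  -- Hölder step
  set A : ℝ≥0∞ := ∫⁻ z, ENNReal.ofReal (‖f z‖ ^ p) ∂μ with hA
  have hgs : ∀ z, g z ^ (p / p₀) = ENNReal.ofReal (‖f z‖ ^ p) := by
    intro z
    rw [hg]
    rw [ENNReal.ofReal_rpow_of_nonneg (by positivity) (by positivity)]
    congr 1
    rw [← Real.rpow_mul (norm_nonneg _)]
    congr 1
    field_simp
  have hHolder : (∫⁻ z, g z ∂μ) ≤ A ^ (p₀ / p) * μ B ^ (1 - p₀ / p) := by
    rcases eq_or_lt_of_le hp₀p with hpe | hps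
    · subst hpe
      simp only [div_self hp₀0.ne', sub_self, ENNReal.rpow_one,
        ENNReal.rpow_zero, mul_one]
      exact le_of_eq rfl
    · set s : ℝ := p / p₀ with hs
      have hs1 : 1 < s := (one_lt_div hp₀0).mpr hps
      have hpq : s.HolderConjugate (Real.conjExponent s) :=
        Real.HolderConjugate.conjExponent hs1
      set q : ℝ := Real.conjExponent s with hq
      have hind : Measurable (B.indicator (fun _ => (1:ℝ≥0∞))) :=
        measurable_const.indicator measurableSet_ball
      have key := ENNReal.lintegral_mul_le_Lp_mul_Lq μ hpq hgmeas.aemeasurable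
        hind.aemeasurable
      have heq : (∫⁻ z, g z ∂μ)
          = ∫⁻ z, (g * B.indicator (fun _ => (1:ℝ≥0∞))) z ∂μ := by
        apply lintegral_congr
        intro z
        by_cases hz : z ∈ B
        · simp [Set.indicator_of_mem hz]
        · simp [Set.indicator_of_notMem hz, hg0 z hz]
      rw [heq]
      refine key.trans (le_of_eq ?_)
      congr 1
      · rw [hA, show (1/s) = p₀ / p by rw [hs]; field_simp]
        congr 1
        exact lintegral_congr hgs
      · have hiq : ∀ z, B.indicator (fun _ => (1:ℝ≥0∞)) z ^ q
            = B.indicator (fun _ => (1:ℝ≥0∞)) z := by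
          intro z
          by_cases hz : z ∈ B
          · simp [Set.indicator_of_mem hz]
          · simp [Set.indicator_of_notMem hz,
              ENNReal.zero_rpow_of_pos hpq.symm.pos]
        rw [lintegral_congr hiq, lintegral_indicator measurableSet_ball _]
        simp only [lintegral_one, Measure.restrict_apply_univ]
        congr 1
        rw [hq, hs, Real.conjExponent]
        field_simp
  -- combine
  have hfinal : (∫⁻ z, μ (ball z r) ^ e * g z ∂μ) ≤
      K ^ (-e) * A ^ (p₀ / p) := by
    refine hint1.trans ?_
    calc K ^ (-e) * μ B ^ e * ∫⁻ z, g z ∂μ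
        ≤ K ^ (-e) * μ B ^ e * (A ^ (p₀ / p) * μ B ^ (1 - p₀ / p)) := by gcongr
      _ = K ^ (-e) * A ^ (p₀ / p) * (μ B ^ e * μ B ^ (1 - p₀ / p)) := by ring
      _ = K ^ (-e) * A ^ (p₀ / p) := by
          rw [← ENNReal.rpow_add _ _ hμB0 hμBtop, he']
          norm_num
  have h1p₀ : (0:ℝ) ≤ 1 / p₀ := by positivity
  calc (∫⁻ z, μ (ball z r) ^ e * g z ∂μ) ^ (1 / p₀)
      ≤ (K ^ (-e) * A ^ (p₀ / p)) ^ (1 / p₀) :=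
        ENNReal.rpow_le_rpow hfinal h1p₀
    _ = K ^ (-e * (1 / p₀)) * A ^ (p₀ / p * (1 / p₀)) := by
        rw [ENNReal.mul_rpow_of_nonneg _ _ h1p₀, ← ENNReal.rpow_mul,
          ← ENNReal.rpow_mul]
    _ = ENNReal.ofReal ((C * 2 ^ n) ^ (1 / p₀ - 1 / p)) * A ^ (1 / p) := by
        congr 1
        · have h1 : p₀ / p * (1 / p₀) = 1 / p := by
            rw [div_mul_div_comm, mul_one, mul_comm p p₀, ← div_div,
              div_self hp₀0.ne']
          have hexp : -e * (1 / p₀) = 1 / p₀ - 1 / p := by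
            rw [he', neg_sub, sub_mul, one_mul, h1]
          rw [hexp, hK, ← ENNReal.ofReal_rpow_of_pos hCpos]
        · congr 1
          field_simp
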